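/- Let A ∈ ℝ^{m×n} and B ∈ ℝ^{n×m}, let p₁,…,p_n be strictly positive probabilities summing to one, and let W ∈ ℝ^{s×n} be the random sampling-and-rescaling matrix of Algorithm 1 built from these probabilities. Then E[(tr(A Wᵀ W B − A B))²] ≤ Σ_{i=1}^{n} ((B A)_{ii})² / (s p_i). -/

import Mathlib

open Matrix BigOperators

noncomputable def frobNorm {m n : Type*} [Fintype m] [Fintype n]
    (A : Matrix m n ℝ) : ℝ := Real.sqrt (∑ i, ∑ j, (A i j) ^ 2)

noncomputable def specNorm {m n : ℕ} (A : Matrix (Fin m) (Fin n) ℝ) : ℝ :=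
  ‖LinearMap.toContinuousLinearMap (Matrix.toEuclideanLin A)‖

noncomputable def truncDiag {r : ℕ} (σ : Fin r → ℝ) (m : ℕ) :
    Matrix (Fin r) (Fin r) ℝ :=
  Matrix.diagonal fun i => if (i : ℕ) < m then σ i else 0

noncomputable def samplingMatrix {n : ℕ} (p : Fin n → ℝ) (s : ℕ) (ω : Fin s → Fin n) :
    Matrix (Fin s) (Fin n) ℝ :=
  fun i j => if j = ω i then 1 / Real.sqrt (s * p j) else 0

noncomputable def expec {n s : ℕ} (p : Fin n → ℝ) (f : (Fin s → Fin n) → ℝ) : ℝ :=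
  ∑ ω : Fin s → Fin n, (∏ i, p (ω i)) * f ω

open Classical in
noncomputable def probOf {n s : ℕ} (p : Fin n → ℝ) (E : (Fin s → Fin n) → Prop) : ℝ :=
  ∑ ω : Fin s → Fin n, if E ω then (∏ i, p (ω i)) else 0

def firstCols {n r : ℕ} (U : Matrix (Fin n) (Fin r) ℝ) (k : ℕ) (h : k ≤ r) :
    Matrix (Fin n) (Fin k) ℝ :=
  fun i j => U i (Fin.castLE h j)

noncomputable def ridgeDiag {r : ℕ} (σ : Fin r → ℝ) (lam : ℝ) :
    Matrix (Fin r) (Fin r) ℝ :=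
  Matrix.diagonal fun i => σ i / Real.sqrt (σ i ^ 2 + lam)

lemma master {n s : ℕ} (p : Fin n → ℝ) (g : Fin s → Fin n → ℝ) :
    expec p (fun ω => ∏ i, g i (ω i)) = ∏ i, ∑ k, p k * g i k := by
  rw [Fintype.prod_sum]
  unfold expec
  exact Finset.sum_congr rfl fun ω _ => (Finset.prod_mul_distrib).symm

lemma trace_sampled {m n : ℕ} (s : ℕ) (A : Matrix (Fin m) (Fin n) ℝ)
    (B : Matrix (Fin n) (Fin m) ℝ) (p : Fin n → ℝ) (hp : ∀ i, 0 < p i)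
    (ω : Fin s → Fin n) :
    Matrix.trace (A * (samplingMatrix p s ω)ᵀ * samplingMatrix p s ω * B)
      = ∑ i : Fin s, (B * A) (ω i) (ω i) / (↑s * p (ω i)) := by
  set W := samplingMatrix p s ω with hW
  rw [Matrix.trace_mul_comm, ← Matrix.mul_assoc, ← Matrix.mul_assoc,
    Matrix.trace_mul_comm, Matrix.mul_assoc]
  unfold Matrix.trace
  congr 1; funext i
  simp only [Matrix.diag_apply, Matrix.mul_apply, Matrix.transpose_apply, hW,
    samplingMatrix, ite_mul, mul_ite, zero_mul, mul_zero,
    Finset.sum_ite_eq', Finset.mem_univ, if_true]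
  have hsp : 0 < (s:ℝ) * p (ω i) :=
    mul_pos (by exact_mod_cast i.pos) (hp _)
  rw [Finset.mul_sum, Finset.sum_div]
  refine Finset.sum_congr rfl fun x _ => ?_
  have h2 : Real.sqrt ((s:ℝ) * p (ω i)) * Real.sqrt ((s:ℝ) * p (ω i))
      = (s:ℝ) * p (ω i) := Real.mul_self_sqrt hsp.le
  rw [eq_div_iff hsp.ne']
  have h3 : Real.sqrt ((s:ℝ) * p (ω i)) ≠ 0 := Real.sqrt_ne_zero'.2 hsp
  have h4 : (1 / Real.sqrt ((s:ℝ) * p (ω i))) * (1 / Real.sqrt ((s:ℝ) * p (ω i)))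
      * ((s:ℝ) * p (ω i)) = 1 := by
    rw [div_mul_div_comm, one_mul, div_mul_eq_mul_div, one_mul, h2,
      div_self hsp.ne']
  linear_combination (B (ω i) x * A x (ω i)) * h4


/-- expected squared trace error of sampled matrix multiplication. -/
theorem stmt_6 {m n : ℕ} (s : ℕ) (hs : 0 < s)
    (A : Matrix (Fin m) (Fin n) ℝ) (B : Matrix (Fin n) (Fin m) ℝ)
    (p : Fin n → ℝ) (hp : ∀ i, 0 < p i) (hsum : ∑ i, p i = 1) :
    expec p (fun (ω : Fin s → Fin n) =>
      (Matrix.trace (A * (samplingMatrix p s ω)ᵀ * samplingMatrix p s ω * B - A * B)) ^ 2)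
    ≤ ∑ i, ((B * A) i i) ^ 2 / (s * p i) := by
  classical
  have hs' : (s:ℝ) ≠ 0 := Nat.cast_ne_zero.2 hs.ne'
  set f : Fin n → ℝ := fun k => (B * A) k k / (↑s * p k) with hf
  set μ : ℝ := ∑ k, p k * f k with hμdef
  have hμtr : Matrix.trace (A * B) = (s:ℝ) * μ := by
    rw [Matrix.trace_mul_comm, Matrix.trace, hμdef, Finset.mul_sum]
    refine Finset.sum_congr rfl fun k _ => ?_
    simp only [Matrix.diag_apply, hf]
    have hne : (↑s:ℝ) * p k ≠ 0 := mul_ne_zero hs' (hp k).ne'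
    rw [show (↑s:ℝ) * (p k * ((B * A) k k / (↑s * p k)))
        = (B * A) k k / (↑s * p k) * (↑s * p k) from by ring,
      div_mul_cancel₀ _ hne]
  set g : Fin n → ℝ := fun k => f k - μ with hgdef
  have hg0 : ∑ k, p k * g k = 0 := by
    simp only [hgdef, mul_sub]
    rw [Finset.sum_sub_distrib, ← Finset.sum_mul, hsum, one_mul, ← hμdef, sub_self]
  have hfun : (fun ω : Fin s → Fin n =>
      (Matrix.trace (A * (samplingMatrix p s ω)ᵀ * samplingMatrix p s ω * B - A * B)) ^ 2)
      = fun ω => (∑ i : Fin s, g (ω i)) ^ 2 := by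
    funext ω
    rw [Matrix.trace_sub, trace_sampled s A B p hp ω, hμtr]
    congr 1
    simp only [hgdef, hf, Finset.sum_sub_distrib, Finset.sum_const,
      Finset.card_univ, Fintype.card_fin, nsmul_eq_mul]
  rw [hfun]
  have key : ∀ i j : Fin s, expec p (fun ω => g (ω i) * g (ω j))
      = if i = j then ∑ k, p k * g k ^ 2 else 0 := by
    intro i j
    have hfun2 : (fun ω : Fin s → Fin n => g (ω i) * g (ω j))
        = fun ω => ∏ t, ((if t = i then g (ω t) else 1) * (if t = j then g (ω t) else 1)) := by
      funext ω
      rw [Finset.prod_mul_distrib]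
      simp
    rw [hfun2, master p (fun t k => (if t = i then g k else 1) * (if t = j then g k else 1))]
    by_cases hij : i = j
    · subst hij
      rw [if_pos rfl]
      rw [Finset.prod_eq_single i]
      · refine Finset.sum_congr rfl fun k _ => ?_
        rw [if_pos rfl]
        ring
      · intro t _ ht
        simp only [if_neg ht, one_mul, mul_one, hsum]
      · simp
    · rw [if_neg hij]
      refine Finset.prod_eq_zero (Finset.mem_univ i) ?_
      simp only [if_pos rfl, if_neg hij, mul_one]
      exact hg0
  have expand : expec p (fun ω => (∑ i : Fin s, g (ω i)) ^ 2)
      = ∑ i : Fin s, ∑ j : Fin s, expec p (fun ω => g (ω i) * g (ω j)) := by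
    unfold expec
    have hsq : ∀ ω : Fin s → Fin n,
        (∑ i : Fin s, g (ω i)) ^ 2 = ∑ i : Fin s, ∑ j : Fin s, g (ω i) * g (ω j) := by
      intro ω; rw [pow_two, Finset.sum_mul_sum]
    simp only [hsq, Finset.mul_sum]
    rw [Finset.sum_comm]
    refine Finset.sum_congr rfl fun i _ => ?_
    rw [Finset.sum_comm]
  rw [expand]
  simp only [key, Finset.sum_ite_eq, Finset.sum_ite_eq', Finset.mem_univ, if_true,
    Finset.sum_const, Finset.card_univ, Fintype.card_fin, nsmul_eq_mul]
  have hvar : ∑ k, p k * g k ^ 2 = (∑ k, p k * f k ^ 2) - μ ^ 2 := by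
    have h1 : ∀ k, p k * g k ^ 2
        = p k * f k ^ 2 - 2 * μ * (p k * f k) + μ ^ 2 * p k := by
      intro k; simp only [hgdef]; ring
    rw [Finset.sum_congr rfl fun k _ => h1 k]
    rw [Finset.sum_add_distrib, Finset.sum_sub_distrib, ← Finset.mul_sum,
      ← Finset.mul_sum, hsum, ← hμdef, mul_one]
    ring
  rw [hvar]
  have hle : (s:ℝ) * ((∑ k, p k * f k ^ 2) - μ ^ 2) ≤ (s:ℝ) * ∑ k, p k * f k ^ 2 := by
    have : (0:ℝ) ≤ μ ^ 2 := sq_nonneg μ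
    have hsn : (0:ℝ) ≤ (s:ℝ) := Nat.cast_nonneg s
    nlinarith
  refine hle.trans (le_of_eq ?_)
  rw [Finset.mul_sum]
  refine Finset.sum_congr rfl fun k _ => ?_
  simp only [hf]
  have hpk : p k ≠ 0 := (hp k).ne'
  field_simp
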